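/- In the untyped symmetric λμ-calculus with the μμ′-reduction: if (M N) ▷* μα P, then either M ▷* μα M₁ for some M₁ with M₁[α=_r N] ▷* P, or N ▷* μα N₁ for some N₁ with N₁[α=_l M] ▷* P. -/

import Mathlib

namespace SymLM

/-- Terms of the symmetric λμ-calculus :
T ::= x | λx T | (T T) | μα T | (α T).
λ-variables and μ-variables are two disjoint namespaces, both indexed by ℕ. -/
inductive Lam : Type
| var : ℕ → Lam          -- λ-variable x
| lam : ℕ → Lam → Lam    -- λx M (binds the λ-variable x)
| app : Lam → Lam → Lam  -- (M N)
| mu  : ℕ → Lam → Lam    -- μα M (binds the μ-variable α)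
| name : ℕ → Lam → Lam   -- (α M)

/-- β-substitution M[x:=N] of a term for a λ-variable. -/
def subst : Lam → ℕ → Lam → Lam
| .var y, x, N => if y = x then N else .var y
| .lam y M, x, N => if y = x then .lam y M else .lam y (subst M x N)
| .app M P, x, N => .app (subst M x N) (subst P x N)
| .mu b M, x, N => .mu b (subst M x N)
| .name b M, x, N => .name b (subst M x N)

/-- Direction of a μμ′-substitution: `r` for [α=_r N], `l` for [α=_l N]. -/
inductive Dir : Type
| l | r

/-- μμ′-substitution: `msubst M α .r N` is M[α=_r N], obtained by replacing each
subterm (α U) of M by (α (U N)); `msubst M α .l N` is M[α=_l N], replacing (α U)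
by (α (N U)). -/
def msubst : Lam → ℕ → Dir → Lam → Lam
| .var y, _, _, _ => .var y
| .lam y M, a, d, N => .lam y (msubst M a d N)
| .app M P, a, d, N => .app (msubst M a d N) (msubst P a d N)
| .mu b M, a, d, N => if b = a then .mu b M else .mu b (msubst M a d N)
| .name b M, a, d, N =>
    if b = a then
      match d with
      | .r => .name b (.app (msubst M a d N) N)
      | .l => .name b (.app N (msubst M a d N))
    else .name b (msubst M a d N)

/-- Simultaneous μμ′-substitution for a partial assignment σ of directions and
terms to μ-variables. -/
def smsubst : (ℕ → Option (Dir × Lam)) → Lam → Lam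
| _, .var y => .var y
| σ, .lam y M => .lam y (smsubst σ M)
| σ, .app M P => .app (smsubst σ M) (smsubst σ P)
| σ, .mu b M => .mu b (smsubst (fun c => if c = b then none else σ c) M)
| σ, .name b M =>
    match σ b with
    | some (.r, N) => .name b (.app (smsubst σ M) N)
    | some (.l, N) => .name b (.app N (smsubst σ M))
    | none => .name b (smsubst σ M)

/-- The simultaneous μμ′-substitution [α₁=_{s₁}P₁, ..., α_n=_{s_n}P_n] given as a
finite list of bindings. -/
def applyM (σ : List (ℕ × Dir × Lam)) (M : Lam) : Lam :=
  smsubst (fun a => σ.lookup a) M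

/-- Simultaneous β-substitution for a partial assignment σ of terms to λ-variables. -/
def ssubst : (ℕ → Option Lam) → Lam → Lam
| σ, .var y => (σ y).getD (.var y)
| σ, .lam y M => .lam y (ssubst (fun z => if z = y then none else σ z) M)
| σ, .app M P => .app (ssubst σ M) (ssubst σ P)
| σ, .mu b M => .mu b (ssubst σ M)
| σ, .name b M => .name b (ssubst σ M)

/-- The simultaneous β-substitution [x₁:=N₁, ..., x_k:=N_k] given as a finite list
of bindings. -/
def applyS (σ : List (ℕ × Lam)) (M : Lam) : Lam :=
  ssubst (fun x => σ.lookup x) M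

/-- The iterated application (M P₁ ... P_n). -/
def appList (M : Lam) (l : List Lam) : Lam := l.foldl .app M

/-- Root rule (β) : (λx M N) ▷ M[x:=N]. -/
inductive BetaR : Lam → Lam → Prop
| mk (x : ℕ) (M N : Lam) : BetaR (.app (.lam x M) N) (subst M x N)

/-- Root rule (μ) : (μα M N) ▷ μα M[α=_r N]. -/
inductive MuR : Lam → Lam → Prop
| mk (α : ℕ) (M N : Lam) : MuR (.app (.mu α M) N) (.mu α (msubst M α .r N))

/-- Root rule (μ′) : (N μα M) ▷ μα M[α=_l N]. -/
inductive MuPR : Lam → Lam → Prop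
| mk (α : ℕ) (M N : Lam) : MuPR (.app N (.mu α M)) (.mu α (msubst M α .l N))

/-- One-step reduction: closure of a set `R` of root rules under all contexts. -/
inductive Step (R : Lam → Lam → Prop) : Lam → Lam → Prop
| base {M M'} : R M M' → Step R M M'
| appL {M M' N} : Step R M M' → Step R (.app M N) (.app M' N)
| appR {M N N'} : Step R N N' → Step R (.app M N) (.app M N')
| lam {x M M'} : Step R M M' → Step R (.lam x M) (.lam x M')
| mu {α M M'} : Step R M M' → Step R (.mu α M) (.mu α M')
| name {α M M'} : Step R M M' → Step R (.name α M) (.name α M')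

/-- The root rules of the μμ′-reduction. -/
def mmR : Lam → Lam → Prop := fun M N => MuR M N ∨ MuPR M N

/-- The root rules of the βμμ′-reduction. -/
def bmmR : Lam → Lam → Prop := fun M N => BetaR M N ∨ MuR M N ∨ MuPR M N

/-- `a` is strongly normalizing for the reduction `r` : no infinite `r`-reduction
sequence starts from `a` (accessibility for the reversed relation). -/
def SN {α : Type} (r : α → α → Prop) (a : α) : Prop :=
  Acc (fun x y => r y x) a

/-- Types of the simply typed symmetric λμ-calculus: atoms, ⊥ and A → B. -/
inductive Ty : Type
| atom : ℕ → Ty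
| bot : Ty
| arrow : Ty → Ty → Ty

/-- ¬A abbreviates A → ⊥. -/
def Ty.neg (A : Ty) : Ty := Ty.arrow A Ty.bot

/-- Typing judgment Γ ⊢ M : A.  The context is given by `Γ : ℕ → Ty` for the
λ-variables and `Δ : ℕ → Ty` for the μ-variables, where `Δ α = A` means that the
declaration α : ¬A occurs in the context. -/
inductive Typed : (ℕ → Ty) → (ℕ → Ty) → Lam → Ty → Prop
| var {Γ Δ x A} : Γ x = A → Typed Γ Δ (.var x) A
| lam {Γ Δ x M A B} : Typed (Function.update Γ x A) Δ M B →
    Typed Γ Δ (.lam x M) (.arrow A B)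
| app {Γ Δ M N A B} : Typed Γ Δ M (.arrow A B) → Typed Γ Δ N A →
    Typed Γ Δ (.app M N) B
| mu {Γ Δ α M A} : Typed Γ (Function.update Δ α A) M .bot →
    Typed Γ Δ (.mu α M) A
| name {Γ Δ α M A} : Typed Γ Δ M A → Δ α = A → Typed Γ Δ (.name α M) .bot

open Relation in
lemma rtg_appL {M M' N : Lam} (h : ReflTransGen (Step mmR) M M') :
    ReflTransGen (Step mmR) (.app M N) (.app M' N) :=
  ReflTransGen.lift (fun X => Lam.app X N) (fun _ _ s => Step.appL s) _ _ h

open Relation in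
lemma rtg_appR {M N N' : Lam} (h : ReflTransGen (Step mmR) N N') :
    ReflTransGen (Step mmR) (.app M N) (.app M N') :=
  ReflTransGen.lift (fun X => Lam.app M X) (fun _ _ s => Step.appR s) _ _ h

open Relation in
lemma rtg_lam {x : ℕ} {M M' : Lam} (h : ReflTransGen (Step mmR) M M') :
    ReflTransGen (Step mmR) (.lam x M) (.lam x M') :=
  ReflTransGen.lift (fun X => Lam.lam x X) (fun _ _ s => Step.lam s) _ _ h

open Relation in
lemma rtg_mu {a : ℕ} {M M' : Lam} (h : ReflTransGen (Step mmR) M M') :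
    ReflTransGen (Step mmR) (.mu a M) (.mu a M') :=
  ReflTransGen.lift (fun X => Lam.mu a X) (fun _ _ s => Step.mu s) _ _ h

open Relation in
lemma rtg_name {a : ℕ} {M M' : Lam} (h : ReflTransGen (Step mmR) M M') :
    ReflTransGen (Step mmR) (.name a M) (.name a M') :=
  ReflTransGen.lift (fun X => Lam.name a X) (fun _ _ s => Step.name s) _ _ h

/-- If μa X reduces to T, then T = μa X' with X ▷* X'. -/
lemma mu_red_inv {a : ℕ} {X : Lam} {T : Lam}
    (h : Relation.ReflTransGen (Step mmR) (.mu a X) T) :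
    ∃ X', T = .mu a X' ∧ Relation.ReflTransGen (Step mmR) X X' := by
  induction h with
  | refl => exact ⟨X, rfl, .refl⟩
  | tail _ s ih =>
    obtain ⟨X', rfl, hX⟩ := ih
    cases s with
    | base r => rcases r with r | r <;> cases r
    | mu s' => exact ⟨_, rfl, hX.tail s'⟩

/-- A single step in the substituted argument lifts through msubst. -/
lemma msubst_step_arg (X : Lam) (a : ℕ) (d : Dir) {M M' : Lam}
    (s : Step mmR M M') :
    Relation.ReflTransGen (Step mmR) (msubst X a d M) (msubst X a d M') := by
  induction X with
  | var y => exact .refl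
  | lam y Y ih => exact rtg_lam ih
  | app Y Z ih1 ih2 => exact .trans (rtg_appL ih1) (rtg_appR ih2)
  | mu b Y ih =>
    by_cases hb : b = a
    · simp only [msubst, if_pos hb]; exact .refl
    · simpa [msubst, hb] using rtg_mu ih
  | name b Y ih =>
    by_cases hb : b = a
    · cases d with
      | r =>
        simp only [msubst, hb, if_pos rfl]
        exact rtg_name (.trans (rtg_appL ih) (rtg_appR (.single s)))
      | l =>
        simp only [msubst, hb, if_pos rfl]
        exact rtg_name (.trans (rtg_appR ih) (rtg_appL (.single s)))
    · simpa [msubst, hb] using rtg_name ih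

/-- with the μμ′-reduction, if (M N) ▷* μα P then either M ▷* μα M₁ with
M₁[α=_r N] ▷* P, or N ▷* μα N₁ with N₁[α=_l M] ▷* P. -/
theorem app_red_to_mu :
    ∀ (M N P : Lam) (α : ℕ),
      Relation.ReflTransGen (Step mmR) (.app M N) (.mu α P) →
      (∃ M₁ : Lam, Relation.ReflTransGen (Step mmR) M (.mu α M₁) ∧
        Relation.ReflTransGen (Step mmR) (msubst M₁ α .r N) P) ∨
      (∃ N₁ : Lam, Relation.ReflTransGen (Step mmR) N (.mu α N₁) ∧
        Relation.ReflTransGen (Step mmR) (msubst N₁ α .l M) P) := by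
  have key : ∀ {α : ℕ} {P T : Lam},
      Relation.ReflTransGen (Step mmR) T (.mu α P) → ∀ M N, T = .app M N →
      (∃ M₁ : Lam, Relation.ReflTransGen (Step mmR) M (.mu α M₁) ∧
        Relation.ReflTransGen (Step mmR) (msubst M₁ α .r N) P) ∨
      (∃ N₁ : Lam, Relation.ReflTransGen (Step mmR) N (.mu α N₁) ∧
        Relation.ReflTransGen (Step mmR) (msubst N₁ α .l M) P) := by
    intro α P T h
    induction h using Relation.ReflTransGen.head_induction_on with
    | refl => intro M N hT; cases hT
    | head s hrest ih =>
      intro M N hT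
      subst hT
      cases s with
      | base r =>
        rcases r with r | r
        · cases r with
          | mk α' M' N' =>
            obtain ⟨X', hX, hred⟩ := mu_red_inv hrest
            obtain ⟨rfl, rfl⟩ : α' = α ∧ X' = P := by
              injection hX with h1 h2; exact ⟨h1.symm, h2.symm⟩
            exact Or.inl ⟨M', .refl, hred⟩
        · cases r with
          | mk α' M' N' =>
            obtain ⟨X', hX, hred⟩ := mu_red_inv hrest
            obtain ⟨rfl, rfl⟩ : α' = α ∧ X' = P := by
              injection hX with h1 h2; exact ⟨h1.symm, h2.symm⟩
            exact Or.inr ⟨M', .refl, hred⟩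
      | appL s' =>
        rename_i M'
        rcases ih M' N rfl with ⟨M₁, h1, h2⟩ | ⟨N₁, h1, h2⟩
        · exact Or.inl ⟨M₁, .head s' h1, h2⟩
        · exact Or.inr ⟨N₁, h1, .trans (msubst_step_arg N₁ α .l s') h2⟩
      | appR s' =>
        rename_i N'
        rcases ih M N' rfl with ⟨M₁, h1, h2⟩ | ⟨N₁, h1, h2⟩
        · exact Or.inl ⟨M₁, h1, .trans (msubst_step_arg M₁ α .r s') h2⟩
        · exact Or.inr ⟨N₁, .head s' h1, h2⟩
  intro M N P α h
  exact key h M N rfl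

end SymLM
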